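/- arXiv:2006.07292 — 2 statements merged into one kernel-verified Lean document; each statement's English description precedes it below -/
import Mathlib

section
/- Let Σ be a nonempty finite type and let μ be a probability measure on List Σ (the set of finite words over Σ, equipped with the discrete (⊤) σ-algebra). Let ε, δ ∈ (0,1) be real numbers, let m ≥ 1 be a natural number, and for each i ∈ {1,…,m} set r_i = ⌈(1/ε)(i·ln 2 − ln δ)⌉ (a natural number). Let T ⊆ List Σ be an arbitrary target language and let H_1,…,H_m ⊆ List Σ be arbitrary hypothesis languages. Let P be the product probability measure on Π_{i=1}^m (Fin r_i → List Σ) in which every coordinate is an independent draw from μ (i.e., Measure.pi applied to the measures Measure.pi (fun _ : Fin r_i => μ)). Then the P-measure of the event { ω | ∃ i ∈ {1,…,m}, μ(H_i Δ T) ≥ ε and for every k < r_i the k-th sample of round i, ω i k, lies outside H_i Δ T } is at most δ. (Here A Δ B denotes the symmetric difference (A \ B) ∪ (B \ A).) This is the PAC guarantee of LEXR: the probability that some hypothesis whose error μ(H_i Δ T) is at least ε nevertheless passes its entire round of r_i random tests is at most δ, so a returned explanation is an ε-explanation with probability at least 1 − δ. -/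
open MeasureTheory

/-- Words over the alphabet carry the discrete σ-algebra. -/
instance listDiscrete {α : Type*} : MeasurableSpace (List α) := ⊤

private lemma geom_half_sum (m : ℕ) :
    ∑ i ∈ Finset.range m, ((1:ℝ)/2) ^ (i + 1) = 1 - (1/2) ^ m := by
  induction m with
  | zero => simp
  | succ n ih => rw [Finset.sum_range_succ, ih]; ring

/-- The PAC guarantee of LEXR: the probability that some hypothesis `H i`
(for a round `i ∈ {1,…,m}`) whose explanation error `μ (H i ∆ T)` is at least `ε`
nevertheless passes all `r i` random tests of its round is at most `δ`. -/
theorem lexr_pac_guarantee {α : Type*} [Fintype α] [Nonempty α]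
    (μ : Measure (List α)) [IsProbabilityMeasure μ]
    (ε δ : ℝ) (hε : ε ∈ Set.Ioo (0 : ℝ) 1) (hδ : δ ∈ Set.Ioo (0 : ℝ) 1)
    (m : ℕ) (hm : 1 ≤ m)
    (r : ℕ → ℕ)
    (hr : ∀ i : ℕ, 1 ≤ i → i ≤ m →
      r i = ⌈(1 / ε) * ((i : ℝ) * Real.log 2 - Real.log δ)⌉₊)
    (T : Set (List α)) (H : ℕ → Set (List α)) :
    (Measure.pi (fun i : Fin m => Measure.pi (fun _ : Fin (r (i.1 + 1)) => μ)))
      {ω : (i : Fin m) → Fin (r (i.1 + 1)) → List α |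
        ∃ i : Fin m,
          ENNReal.ofReal ε ≤ μ (symmDiff (H (i.1 + 1)) T) ∧
          ∀ k : Fin (r (i.1 + 1)), ω i k ∉ symmDiff (H (i.1 + 1)) T}
      ≤ ENNReal.ofReal δ := by
  obtain ⟨hε0, hε1⟩ := hε
  obtain ⟨hδ0, hδ1⟩ := hδ
  set P := Measure.pi (fun i : Fin m => Measure.pi (fun _ : Fin (r (i.1 + 1)) => μ)) with hP
  set S : Fin m → Set (List α) := fun i => symmDiff (H (i.1 + 1)) T with hS
  -- rewrite the event as a union
  have hset : {ω : (i : Fin m) → Fin (r (i.1 + 1)) → List α |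
        ∃ i : Fin m,
          ENNReal.ofReal ε ≤ μ (S i) ∧
          ∀ k : Fin (r (i.1 + 1)), ω i k ∉ S i}
      = ⋃ i : Fin m, {ω | ENNReal.ofReal ε ≤ μ (S i) ∧
          ∀ k : Fin (r (i.1 + 1)), ω i k ∉ S i} := by
    ext ω; simp [Set.mem_iUnion]
  rw [show {ω : (i : Fin m) → Fin (r (i.1 + 1)) → List α |
        ∃ i : Fin m,
          ENNReal.ofReal ε ≤ μ (symmDiff (H (i.1 + 1)) T) ∧
          ∀ k : Fin (r (i.1 + 1)), ω i k ∉ symmDiff (H (i.1 + 1)) T} =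
      ⋃ i : Fin m, {ω | ENNReal.ofReal ε ≤ μ (S i) ∧
          ∀ k : Fin (r (i.1 + 1)), ω i k ∉ S i} from hset]
  refine le_trans (measure_iUnion_le _) ?_
  -- bound each term
  have key : ∀ i : Fin m,
      P {ω : (j : Fin m) → Fin (r (j.1 + 1)) → List α |
          ENNReal.ofReal ε ≤ μ (S i) ∧ ∀ k : Fin (r (i.1 + 1)), ω i k ∉ S i}
        ≤ ENNReal.ofReal (δ * (1/2) ^ (i.1 + 1)) := by
    intro i
    by_cases hbig : ENNReal.ofReal ε ≤ μ (S i)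
    · -- the event is the cylinder set
      have hcyl : {ω : (j : Fin m) → Fin (r (j.1 + 1)) → List α |
            ENNReal.ofReal ε ≤ μ (S i) ∧ ∀ k : Fin (r (i.1 + 1)), ω i k ∉ S i}
          = Set.pi Set.univ (Function.update (fun j : Fin m =>
              (Set.univ : Set (Fin (r (j.1 + 1)) → List α))) i
              (Set.pi Set.univ (fun _ : Fin (r (i.1 + 1)) => (S i)ᶜ))) := by
        ext ω
        simp only [Set.mem_setOf_eq, Set.mem_univ_pi, hbig, true_and]
        constructor
        · intro h j
          rcases eq_or_ne j i with rfl | hj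
          · simp only [Function.update_self, Set.mem_univ_pi]
            exact fun k => h k
          · simp [Function.update_of_ne hj]
        · intro h k
          have := h i
          rw [Function.update_self] at this
          exact this k (Set.mem_univ k)
      rw [hcyl, Measure.pi_pi]
      have hprod : (∏ j : Fin m, (Measure.pi fun _ : Fin (r (j.1 + 1)) => μ)
            (Function.update (fun j : Fin m =>
              (Set.univ : Set (Fin (r (j.1 + 1)) → List α))) i
              (Set.pi Set.univ (fun _ : Fin (r (i.1 + 1)) => (S i)ᶜ)) j))
          = (μ ((S i)ᶜ)) ^ (r (i.1 + 1)) := by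
        rw [Finset.prod_eq_single i]
        · rw [Function.update_self, Measure.pi_pi, Finset.prod_const, Finset.card_univ,
            Fintype.card_fin]
        · intro j _ hj
          rw [Function.update_of_ne hj]
          simp [measure_univ]
        · simp
      rw [hprod]
      -- μ (S i)ᶜ ≤ 1 - ε
      have hcompl : μ ((S i)ᶜ) ≤ ENNReal.ofReal (1 - ε) := by
        have h1 : μ ((S i)ᶜ) = 1 - μ (S i) := by
          rw [measure_compl (by trivial) (measure_ne_top μ _), measure_univ]
        rw [h1]
        calc (1 : ENNReal) - μ (S i) ≤ 1 - ENNReal.ofReal ε := tsub_le_tsub_left hbig 1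
          _ = ENNReal.ofReal (1 - ε) := by
              rw [← ENNReal.ofReal_one, ← ENNReal.ofReal_sub _ hε0.le]
      calc (μ ((S i)ᶜ)) ^ (r (i.1 + 1))
          ≤ (ENNReal.ofReal (1 - ε)) ^ (r (i.1 + 1)) :=
            pow_le_pow_left' hcompl _
        _ = ENNReal.ofReal ((1 - ε) ^ (r (i.1 + 1))) := by
            rw [ENNReal.ofReal_pow (by linarith)]
        _ ≤ ENNReal.ofReal (δ * (1/2) ^ (i.1 + 1)) := by
            apply ENNReal.ofReal_le_ofReal
            -- real inequality
            have hi1 : 1 ≤ i.1 + 1 := Nat.le_add_left 1 i.1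
            have him : i.1 + 1 ≤ m := i.2
            have hrval : r (i.1 + 1) =
                ⌈(1 / ε) * (((i.1 + 1 : ℕ) : ℝ) * Real.log 2 - Real.log δ)⌉₊ :=
              hr (i.1 + 1) hi1 him
            have hrge : (1 / ε) * (((i.1 + 1 : ℕ) : ℝ) * Real.log 2 - Real.log δ)
                ≤ (r (i.1 + 1) : ℝ) := by
              rw [hrval]; exact Nat.le_ceil _
            have hεr : ((i.1 + 1 : ℕ) : ℝ) * Real.log 2 - Real.log δ
                ≤ ε * (r (i.1 + 1) : ℝ) := by
              have h2 := mul_le_mul_of_nonneg_left hrge hε0.le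
              rwa [← mul_assoc, mul_one_div, div_self hε0.ne', one_mul] at h2
            calc (1 - ε) ^ (r (i.1 + 1))
                ≤ Real.exp (-ε) ^ (r (i.1 + 1)) := by
                  apply pow_le_pow_left₀ (by linarith)
                  linarith [Real.add_one_le_exp (-ε)]
              _ = Real.exp (-(ε * (r (i.1 + 1) : ℝ))) := by
                  rw [← Real.exp_nat_mul]; ring_nf
              _ ≤ Real.exp (Real.log δ - ((i.1 + 1 : ℕ) : ℝ) * Real.log 2) := by
                  apply Real.exp_le_exp.mpr; linarith
              _ = δ * (1/2) ^ (i.1 + 1) := by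
                  rw [Real.exp_sub, Real.exp_log hδ0, Real.exp_nat_mul,
                    Real.exp_log (by norm_num : (0:ℝ) < 2),
                    div_eq_mul_inv, one_div, inv_pow]
    · -- the event is empty
      have hempty : {ω : (j : Fin m) → Fin (r (j.1 + 1)) → List α |
            ENNReal.ofReal ε ≤ μ (S i) ∧ ∀ k : Fin (r (i.1 + 1)), ω i k ∉ S i} = ∅ := by
        ext ω; simp [hbig]
      rw [hempty]
      simp
  calc (∑' i : Fin m, P {ω : (j : Fin m) → Fin (r (j.1 + 1)) → List α |
          ENNReal.ofReal ε ≤ μ (S i) ∧ ∀ k : Fin (r (i.1 + 1)), ω i k ∉ S i})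
      ≤ ∑' i : Fin m, ENNReal.ofReal (δ * (1/2) ^ (i.1 + 1)) :=
        ENNReal.tsum_le_tsum key
    _ = ENNReal.ofReal (∑ i : Fin m, δ * (1/2) ^ (i.1 + 1)) := by
        rw [tsum_fintype, ← ENNReal.ofReal_sum_of_nonneg]
        intro i _
        positivity
    _ ≤ ENNReal.ofReal δ := by
        apply ENNReal.ofReal_le_ofReal
        rw [← Finset.mul_sum, Fin.sum_univ_eq_sum_range (fun i => ((1:ℝ)/2) ^ (i + 1)),
          geom_half_sum]
        nlinarith [pow_pos (by norm_num : (0:ℝ) < 1/2) m]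
end

section
/- Let Σ be a nonempty finite type. Let P and N be finite sets of finite words over Σ (P, N : Finset (List Σ)) with P ∩ N = ∅ (a sample of positive and negative examples). Call an LTL formula φ consistent with the sample if every u ∈ P satisfies sat u φ and no u ∈ N satisfies sat u φ. Then a consistent formula exists, and moreover there exists a consistent formula φ of minimal size: for every consistent formula ψ, |φ| ≤ |ψ|, where |φ| denotes the number of distinct subformulas of φ. -/
open scoped Classical

/-- LTL formulas over an alphabet `α`, interpreted on finite words:
`φ ::= a | ¬φ | φ ∨ φ | X φ | φ U φ`. -/
inductive LTLFormula (α : Type*) : Type _ where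
  | atom : α → LTLFormula α
  | not : LTLFormula α → LTLFormula α
  | or : LTLFormula α → LTLFormula α → LTLFormula α
  | next : LTLFormula α → LTLFormula α
  | until : LTLFormula α → LTLFormula α → LTLFormula α

/-- Satisfaction of an LTL formula by a finite word. -/
def sat {α : Type*} : List α → LTLFormula α → Prop
  | u, .atom a => u.head? = some a
  | u, .not φ => ¬ sat u φ
  | u, .or φ ψ => sat u φ ∨ sat u ψ
  | [], .next _ => False
  | _ :: t, .next φ => t ≠ [] ∧ sat t φ
  | [], .until _ _ => False
  | b :: t, .until φ ψ =>
      sat (b :: t) ψ ∨ (sat (b :: t) φ ∧ t ≠ [] ∧ sat t (.until φ ψ))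
termination_by u φ => (u.length, sizeOf φ)

/-- The set of subformulas of an LTL formula: the formula itself together with
the subformulas of its immediate subterms. -/
def subformulas {α : Type*} : LTLFormula α → Set (LTLFormula α)
  | .atom a => {.atom a}
  | .not φ => insert (.not φ) (subformulas φ)
  | .or φ ψ => insert (.or φ ψ) (subformulas φ ∪ subformulas ψ)
  | .next φ => insert (.next φ) (subformulas φ)
  | .until φ ψ => insert (.until φ ψ) (subformulas φ ∪ subformulas ψ)

/-- The size of an LTL formula: the number of its distinct subformulas. -/
noncomputable def formulaSize {α : Type*} (φ : LTLFormula α) : ℕ :=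
  (subformulas φ).ncard


section Aux
variable {α : Type*} [Fintype α] [Nonempty α]

noncomputable def trueF (α : Type*) [Nonempty α] : LTLFormula α :=
  .or (.atom (Classical.arbitrary α)) (.not (.atom (Classical.arbitrary α)))

@[simp] theorem sat_trueF (u : List α) : sat u (trueF α) := by
  by_cases h : sat u (.atom (Classical.arbitrary α)) <;>
    simp [trueF, sat, h]

/-- true iff the word is nonempty -/
noncomputable def neF (α : Type*) [Nonempty α] : LTLFormula α :=
  .until (trueF α) (trueF α)

@[simp] theorem sat_neF (u : List α) : sat u (neF α) ↔ u ≠ [] := by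
  cases u <;> simp [neF, sat]

/-- formula characterizing exactly the word u -/
noncomputable def chi : List α → LTLFormula α
  | [] => .not (neF α)
  | [a] => .not (.or (.not (.atom a)) (.next (trueF α)))
  | a :: b :: t => .not (.or (.not (.atom a)) (.not (.next (chi (b :: t)))))

theorem sat_chi (u v : List α) : sat v (chi u) ↔ v = u := by
  induction u generalizing v with
  | nil => simp [chi, sat]
  | cons a t ih =>
    cases t with
    | nil =>
      cases v with
      | nil => simp [chi, sat]
      | cons b s =>
        cases s <;> simp_all [chi, sat]
    | cons c r =>
      cases v with
      | nil => simp [chi, sat]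
      | cons b s =>
        cases s with
        | nil => simp [chi, sat]
        | cons d w =>
          simp [chi, sat, ih]

noncomputable def bigOr : List (LTLFormula α) → LTLFormula α
  | [] => .not (trueF α)
  | φ :: l => .or φ (bigOr l)

theorem sat_bigOr (u : List α) (l : List (LTLFormula α)) :
    sat u (bigOr l) ↔ ∃ φ ∈ l, sat u φ := by
  induction l with
  | nil => simp [bigOr, sat]
  | cons φ l ih => simp [bigOr, sat, ih]

theorem exists_consistent (P : Finset (List α)) :
    ∃ φ : LTLFormula α, ∀ u, sat u φ ↔ u ∈ P := by
  refine ⟨bigOr (P.toList.map chi), fun u => ?_⟩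
  rw [sat_bigOr]
  simp only [List.mem_map, Finset.mem_toList]
  constructor
  · rintro ⟨φ, ⟨w, hw, rfl⟩, hs⟩
    rwa [(sat_chi w u).mp hs]
  · intro h; exact ⟨chi u, ⟨u, h, rfl⟩, (sat_chi u u).mpr rfl⟩

end Aux

/-- Given a sample of positive examples `P` and negative examples `N` with
`P ∩ N = ∅`, a consistent LTL formula exists, and moreover there is a
consistent formula of minimal size among all consistent formulas. -/
theorem minimal_consistent_formula_exists {α : Type*} [Fintype α] [Nonempty α]
    (P N : Finset (List α)) (hPN : P ∩ N = ∅) :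
    ∃ φ : LTLFormula α,
      ((∀ u ∈ P, sat u φ) ∧ (∀ u ∈ N, ¬ sat u φ)) ∧
      ∀ ψ : LTLFormula α,
        ((∀ u ∈ P, sat u ψ) ∧ (∀ u ∈ N, ¬ sat u ψ)) →
        formulaSize φ ≤ formulaSize ψ := by
  classical
  obtain ⟨φ0, h0⟩ := exists_consistent P
  have cons0 : (∀ u ∈ P, sat u φ0) ∧ (∀ u ∈ N, ¬ sat u φ0) := by
    constructor
    · intro u hu; exact (h0 u).mpr hu
    · intro u hu hs
      have : u ∈ P := (h0 u).mp hs
      have : u ∈ P ∩ N := Finset.mem_inter.mpr ⟨this, hu⟩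
      simp [hPN] at this
  have H : ∃ n, ∃ φ : LTLFormula α,
      ((∀ u ∈ P, sat u φ) ∧ (∀ u ∈ N, ¬ sat u φ)) ∧ formulaSize φ = n :=
    ⟨formulaSize φ0, φ0, cons0, rfl⟩
  obtain ⟨φ, hφ, hsize⟩ := Nat.find_spec H
  refine ⟨φ, hφ, fun ψ hψ => ?_⟩
  rw [hsize]
  exact Nat.find_le ⟨ψ, hψ, rfl⟩
end
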